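/- Let k'/k be a quadratic field extension and f a homogeneous polynomial over k. If over k' there exist a subspace Q of quadrics of dimension r_2 and a subspace P of linear forms of dimension r_1 with f ∈ (Q, P), then over k there exist such subspaces of dimensions 2r_2 and 2r_1 respectively with f in the generated ideal. -/

import Mathlib

open MvPolynomial

section Aux

variable {k k' : Type*} [Field k] [Field k'] [Algebra k k'] {σ : Type*} [DecidableEq σ]

/-- Apply a `k`-linear functional `k' → k` coefficientwise to a polynomial. -/
noncomputable def coeffwise (φ : k' →ₗ[k] k) : MvPolynomial σ k' →+ MvPolynomial σ k :=
  AddMonoidAlgebra.coeffAddEquiv.symm.toAddMonoidHom.comp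
    ((Finsupp.mapRange.addMonoidHom φ.toAddMonoidHom).comp
      AddMonoidAlgebra.coeffAddEquiv.toAddMonoidHom)

lemma coeff_coeffwise (φ : k' →ₗ[k] k) (p : MvPolynomial σ k') (m : σ →₀ ℕ) :
    coeff m (coeffwise φ p) = φ (coeff m p) := rfl

lemma coeffwise_mul_map (φ : k' →ₗ[k] k) (g : MvPolynomial σ k') (q : MvPolynomial σ k) :
    coeffwise φ (g * map (algebraMap k k') q) = coeffwise φ g * q := by
  apply MvPolynomial.ext
  intro m
  rw [coeff_coeffwise, coeff_mul, coeff_mul, map_sum]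
  refine Finset.sum_congr rfl fun x _ => ?_
  rw [coeff_coeffwise, coeff_map, mul_comm, ← Algebra.smul_def, map_smul, smul_eq_mul,
    mul_comm]

lemma coeffwise_isHomogeneous {φ : k' →ₗ[k] k} {p : MvPolynomial σ k'} {n : ℕ}
    (hp : p.IsHomogeneous n) : (coeffwise φ p).IsHomogeneous n := by
  intro m hm
  refine hp fun h0 => hm ?_
  rw [coeff_coeffwise, h0, map_zero]

lemma decompose (b : Module.Basis (Fin 2) k k') (g : MvPolynomial σ k') :
    g = ∑ t, C (b t) * map (algebraMap k k') (coeffwise (b.coord t) g) := by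
  apply MvPolynomial.ext
  intro m
  rw [MvPolynomial.coeff_sum]
  have hrepr := b.sum_repr (coeff m g)
  calc coeff m g = ∑ t, b.repr (coeff m g) t • b t := hrepr.symm
    _ = ∑ t, coeff m (C (b t) * map (algebraMap k k') (coeffwise (b.coord t) g)) := by
        refine Finset.sum_congr rfl fun t _ => ?_
        rw [coeff_C_mul, coeff_map, coeff_coeffwise, Module.Basis.coord_apply, Algebra.smul_def,
          mul_comm]

end Aux

/-- Let `k'/k` be a quadratic (degree-2 Galois) field extension and `f` a homogeneous
polynomial over `k`.  If over `k'` the polynomial `f` lies in the ideal generated by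
`r₂` quadrics and `r₁` linear forms, then over `k` it lies in the ideal generated by
`2r₂` quadrics and `2r₁` linear forms. -/
theorem schmidt_rank_quadratic_descent {k k' : Type*} [Field k] [Field k'] [Algebra k k']
    [IsGalois k k'] (hdeg : Module.finrank k k' = 2)
    {n d : ℕ} (f : MvPolynomial (Fin n) k) (hf : f.IsHomogeneous d)
    {r₂ r₁ : ℕ}
    (h : ∃ (Q : Fin r₂ → MvPolynomial (Fin n) k') (P : Fin r₁ → MvPolynomial (Fin n) k'),
      (∀ i, (Q i).IsHomogeneous 2) ∧ (∀ i, (P i).IsHomogeneous 1) ∧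
        MvPolynomial.map (algebraMap k k') f ∈ Ideal.span (Set.range Q ∪ Set.range P)) :
    ∃ (Q : Fin (2 * r₂) → MvPolynomial (Fin n) k) (P : Fin (2 * r₁) → MvPolynomial (Fin n) k),
      (∀ i, (Q i).IsHomogeneous 2) ∧ (∀ i, (P i).IsHomogeneous 1) ∧
        f ∈ Ideal.span (Set.range Q ∪ Set.range P) := by
  obtain ⟨Q, P, hQ, hP, hmem⟩ := h
  have : FiniteDimensional k k' :=
    FiniteDimensional.of_finrank_pos (by rw [hdeg]; norm_num)
  let b : Module.Basis (Fin 2) k k' := Module.finBasisOfFinrankEq k k' hdeg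
  obtain ⟨φ, hφ⟩ := (Algebra.linearMap k k').exists_leftInverse_of_injective
    (by rw [LinearMap.ker_eq_bot]; exact fun x y hxy => (algebraMap k k').injective hxy)
  have hret : ∀ c : k, φ (algebraMap k k' c) = c := fun c => by
    have := LinearMap.congr_fun hφ c
    simpa using this
  have hf' : f = coeffwise φ (MvPolynomial.map (algebraMap k k') f) := by
    apply MvPolynomial.ext
    intro m
    rw [coeff_coeffwise, coeff_map, hret]
  obtain ⟨c, hcS, hcsum⟩ := Submodule.mem_span_set.mp hmem
  refine ⟨fun i => coeffwise (b.coord (finProdFinEquiv.symm i).1) (Q (finProdFinEquiv.symm i).2),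
      fun i => coeffwise (b.coord (finProdFinEquiv.symm i).1) (P (finProdFinEquiv.symm i).2),
      fun i => coeffwise_isHomogeneous (hQ _),
      fun i => coeffwise_isHomogeneous (hP _), ?_⟩
  rw [hf', ← hcsum, Finsupp.sum, map_sum]
  apply Ideal.sum_mem
  intro g hg
  have hdec : c g * g
      = ∑ t, (c g * C (b t)) * map (algebraMap k k') (coeffwise (b.coord t) g) := by
    have h1 := decompose b g
    calc c g * g = c g * ∑ t, C (b t) * map (algebraMap k k') (coeffwise (b.coord t) g) := by
          rw [← h1]
      _ = _ := by rw [Finset.mul_sum]; exact Finset.sum_congr rfl fun t _ => by ring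
  rw [smul_eq_mul, hdec, map_sum]
  apply Ideal.sum_mem
  intro t _
  rw [coeffwise_mul_map]
  refine Ideal.mul_mem_left _ _ (Ideal.subset_span ?_)
  rcases hcS hg with ⟨i, rfl⟩ | ⟨i, rfl⟩
  · exact Or.inl ⟨finProdFinEquiv (t, i), by simp⟩
  · exact Or.inr ⟨finProdFinEquiv (t, i), by simp⟩
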